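/- Let L and L̃ be filtered SLie∞-algebras, n ≥ 1, and U : L → L̃ an ∞-morphism compatible with the filtrations whose linear term φ induces a quasi-isomorphism F_nL/F_{n+1}L → F_nL̃/F_{n+1}L̃. Let α and α' be MC elements of L with α' − α ∈ F_nL, and suppose there exists a rectified 1-cell β̃ = β̃_0(t_0) + dt_0 β̃_1 in MC_•(L̃) with β̃_1 ∈ (F_nL̃)^{−1}, β̃_0(0) = U_*(α) and β̃_0(1) = U_*(α'). Then α' − α, which represents a cocycle in the quotient complex F_nL/F_{n+1}L, represents a coboundary there: there exists ρ ∈ (F_nL)^{−1} with α' − α − ∂ρ ∈ F_{n+1}L. -/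

import Mathlib

/-!
# Filtered shifted L∞-algebras (core framework)

We work over a field `k` of characteristic zero.  A *shifted* L∞-algebra
(`SLie∞`-algebra) is modelled as an internally ℤ-graded `k`-module `L`
(`deg : ℤ → Submodule k L`, internal direct sum) with a degree `+1`
differential `diff`, and symmetric degree `+1` multibrackets
`br m : L^m → L` (`m ≥ 2`, extended by `0` for `m < 2`) which are graded
symmetric with Koszul signs and satisfy the generalized Jacobi relations.
A *filtered* `SLie∞`-algebra in addition carries a complete descending
filtration `F : ℕ → Submodule k L` (with `F 0 = F 1 = ⊤`) by subcomplexes,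
compatible with the brackets.

Infinite sums (curvature, twists, pushforwards of Maurer-Cartan elements, ...)
are expressed relationally via `IsLim`: `IsLim a x` says that the sequence of
partial sums `a` converges to `x` in the topology determined by the filtration.
-/

open Finset

noncomputable section

/-- The Koszul sign `ε(σ; v₁, …, v_m)` of a permutation `σ` acting on homogeneous
elements of degrees `d i`: the product of `(-1)^(d i * d j)` over all
inversions `(i, j)` of `σ`. -/
def koszulSign {m : ℕ} (d : Fin m → ℤ) (σ : Equiv.Perm (Fin m)) : ℤˣ :=
  ∏ p ∈ Finset.univ.filter (fun p : Fin m × Fin m => p.1 < p.2 ∧ σ p.2 < σ p.1),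
    (-1 : ℤˣ) ^ (d p.1 * d p.2)

theorem card_le_of_fin {m : ℕ} (S : Finset (Fin m)) : S.card ≤ m := by
  simpa using S.card_le_univ

/-- The `(S.card, m - S.card)`-shuffle permutation determined by a subset
`S ⊆ {0, …, m-1}`: it enumerates the elements of `S` (in increasing order) first
and then the elements of the complement of `S` (in increasing order). -/
def moveFrontPerm {m : ℕ} (S : Finset (Fin m)) : Equiv.Perm (Fin m) :=
  Tuple.sort (fun i => (toLex ((if i ∈ S then (0 : Fin 2) else 1), i) : Fin 2 ×ₗ Fin m))

/-- The index of the `j`-th element of the front block. -/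
def frontIdx {m : ℕ} (S : Finset (Fin m)) (j : Fin S.card) : Fin m :=
  ⟨j, lt_of_lt_of_le j.isLt (card_le_of_fin S)⟩

/-- The index of the `j`-th element of the back block. -/
def backIdx {m : ℕ} (S : Finset (Fin m)) (j : Fin (m - S.card)) : Fin m :=
  ⟨S.card + j, by have h1 := card_le_of_fin S; have h2 := j.isLt; omega⟩

variable (k : Type) [Field k] [CharZero k]

/-- A filtered shifted L∞-algebra (`SLie∞`-algebra) over `k`. -/
structure FilteredSLie where
  /-- underlying `k`-module -/
  L : Type
  [addgrp : AddCommGroup L]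
  [mod : Module k L]
  /-- internal ℤ-grading -/
  deg : ℤ → Submodule k L
  internal : DirectSum.IsInternal deg
  /-- the differential `∂` -/
  diff : L →ₗ[k] L
  diff_sq : ∀ x, diff (diff x) = 0
  diff_deg : ∀ (d : ℤ) (x), x ∈ deg d → diff x ∈ deg (d + 1)
  /-- degree `1` symmetric multibrackets `{·, …, ·}_m`; by convention `br m = 0` for `m < 2`. -/
  br : ∀ m : ℕ, MultilinearMap k (fun _ : Fin m => L) L
  br_low : ∀ m, m < 2 → br m = 0
  br_deg : ∀ (m : ℕ) (d : Fin m → ℤ) (v : Fin m → L), (∀ i, v i ∈ deg (d i)) →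
      br m v ∈ deg (1 + ∑ i, d i)
  br_symm : ∀ (m : ℕ) (d : Fin m → ℤ) (v : Fin m → L), (∀ i, v i ∈ deg (d i)) →
      ∀ σ : Equiv.Perm (Fin m), br m (v ∘ σ) = ((koszulSign d σ : ℤˣ) : ℤ) • br m v
  /-- the generalized Jacobi relations of a shifted L∞-algebra; the sum over
  `(p, m-p)`-shuffles is written as a sum over subsets `S` of cardinality `p`. -/
  jacobi : ∀ (m : ℕ), 2 ≤ m → ∀ (d : Fin m → ℤ) (v : Fin m → L), (∀ i, v i ∈ deg (d i)) →
      diff (br m v)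
        + ∑ i : Fin m,
            (((-1 : ℤˣ) ^ (∑ j ∈ Finset.univ.filter (fun j => j < i), d j) : ℤˣ) : ℤ) •
              br m (Function.update v i (diff (v i)))
        + ∑ S ∈ Finset.univ.filter (fun S : Finset (Fin m) => 2 ≤ S.card ∧ S.card ≤ m - 1),
            ((koszulSign d (moveFrontPerm S) : ℤˣ) : ℤ) •
              br (m - S.card + 1)
                (Fin.cons (br S.card fun j => v (moveFrontPerm S (frontIdx S j)))
                  (fun j => v (moveFrontPerm S (backIdx S j))))
        = 0
  /-- complete descending filtration `L = F 1 ⊇ F 2 ⊇ ⋯` (we also set `F 0 = ⊤`). -/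
  F : ℕ → Submodule k L
  F_zero : F 0 = ⊤
  F_one : F 1 = ⊤
  F_anti : ∀ {a b : ℕ}, a ≤ b → F b ≤ F a
  F_diff : ∀ (n : ℕ) (x), x ∈ F n → diff x ∈ F n
  F_graded : ∀ n : ℕ, F n = ⨆ d : ℤ, (F n ⊓ deg d)
  F_br : ∀ (m : ℕ) (ι : Fin m → ℕ) (v : Fin m → L), (∀ i, v i ∈ F (ι i)) →
      br m v ∈ F (∑ i, ι i)
  /-- the filtration is separated … -/
  sep : ∀ x : L, (∀ n, x ∈ F n) → x = 0
  /-- … and complete: `L = lim L / F n`. -/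
  complete : ∀ a : ℕ → L, (∀ n, a (n + 1) - a n ∈ F (n + 1)) →
      ∃ x, ∀ n, x - a n ∈ F (n + 1)

attribute [instance] FilteredSLie.addgrp FilteredSLie.mod

namespace FilteredSLie

variable {k}
variable (A : FilteredSLie k)

/-- `A.IsLim a x`: the sequence `a` converges to `x` in the filtration topology. -/
def IsLim (a : ℕ → A.L) (x : A.L) : Prop :=
  ∀ n : ℕ, ∃ N : ℕ, ∀ m ≥ N, x - a m ∈ A.F n

/-- Partial sums of the curvature `curv α = ∂α + Σ_{m ≥ 2} (1/m!) {α, …, α}_m`. -/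
def curvPartial (α : A.L) (M : ℕ) : A.L :=
  A.diff α + ∑ m ∈ Finset.range (M + 1), ((m.factorial : k)⁻¹) • A.br m (fun _ => α)

/-- `A.IsCurv α c` : `c = curv α`. -/
def IsCurv (α : A.L) (c : A.L) : Prop := A.IsLim (A.curvPartial α) c

/-- `α` is a Maurer-Cartan element: `α` has degree `0` and `curv α = 0`. -/
def IsMC (α : A.L) : Prop := α ∈ A.deg 0 ∧ A.IsCurv α 0

/-- Partial sums of the twisted differential
`∂^α v = ∂v + Σ_{m ≥ 1} (1/m!) {α, …, α, v}_{m+1}`. -/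
def twistDiffPartial (α v : A.L) (M : ℕ) : A.L :=
  A.diff v + ∑ m ∈ Finset.range (M + 1),
    ((m.factorial : k)⁻¹) • A.br (m + 1) (Fin.snoc (fun _ : Fin m => α) v)

/-- `A.IsTwistDiff α v w` : `w = ∂^α v`. -/
def IsTwistDiff (α v w : A.L) : Prop := A.IsLim (A.twistDiffPartial α v) w

/-! ### Coefficientwise operations on `L ⊗̂ k[t]`

An element of `L ⊗̂ k[t]` (power series whose coefficients tend to `0` in the
filtration topology) is modelled by its coefficient sequence `ℕ → L`. -/

/-- The `j`-th coefficient of the bracket of power series (Cauchy product). -/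
def coeffBr (m : ℕ) (c : Fin m → (ℕ → A.L)) (j : ℕ) : A.L :=
  ∑ f ∈ Finset.univ.filter (fun f : Fin m → Fin (j + 1) => ∑ i, ((f i : ℕ)) = j),
    A.br m (fun i => c i (f i))

/-- Partial sums of the `j`-th coefficient of `curv (β₀(t))`. -/
def coeffCurvPartial (b0 : ℕ → A.L) (j M : ℕ) : A.L :=
  A.diff (b0 j) +
    ∑ m ∈ Finset.range (M + 1), ((m.factorial : k)⁻¹) • A.coeffBr m (fun _ => b0) j

/-- Partial sums of the `j`-th coefficient of `∂^{β₀(t)} β₁(t)`. -/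
def coeffFlowPartial (b0 b1 : ℕ → A.L) (j M : ℕ) : A.L :=
  A.diff (b1 j) + ∑ m ∈ Finset.range (M + 1),
    ((m.factorial : k)⁻¹) •
      A.coeffBr (m + 1) (fun i : Fin (m + 1) => if (i : ℕ) < m then b0 else b1) j

/-- `A.IsEval1 b x` : the power series with coefficients `b` evaluates to `x` at `t = 1`. -/
def IsEval1 (b : ℕ → A.L) (x : A.L) : Prop :=
  A.IsLim (fun M => ∑ j ∈ Finset.range (M + 1), b j) x

end FilteredSLie

/-- A `1`-cell `β = β₀(t₀) + dt₀ β₁(t₀)` in the Deligne–Getzler–Hinich ∞-groupoid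
`MC_•(A)`, i.e. a Maurer–Cartan element of `A ⊗̂ Ω₁`: written in terms of the
coefficient sequences `b0` of `β₀` and `b1` of `β₁`.  The Maurer–Cartan equation
is equivalent to `curv (β₀(t₀)) = 0` (`mc`) together with
`(d/dt₀) β₀(t₀) = ∂^{β₀(t₀)} β₁(t₀)` (`flow`). -/
structure OneCell {k : Type} [Field k] [CharZero k] (A : FilteredSLie k) where
  b0 : ℕ → A.L
  b1 : ℕ → A.L
  b0_deg : ∀ j, b0 j ∈ A.deg 0
  b1_deg : ∀ j, b1 j ∈ A.deg (-1)
  b0_decay : ∀ n : ℕ, ∃ N, ∀ j ≥ N, b0 j ∈ A.F n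
  b1_decay : ∀ n : ℕ, ∃ N, ∀ j ≥ N, b1 j ∈ A.F n
  mc : ∀ j, A.IsLim (A.coeffCurvPartial b0 j) 0
  flow : ∀ j, A.IsLim (A.coeffFlowPartial b0 b1 j) ((j + 1) • b0 (j + 1))

namespace OneCell

variable {k : Type} [Field k] [CharZero k] {A : FilteredSLie k}

/-- A `1`-cell is *rectified* if `β₁` is constant in `t₀`. -/
def Rectified (c : OneCell A) : Prop := ∀ j, 1 ≤ j → c.b1 j = 0

/-- A `1`-cell connects `β₀(0)` to `β₀(1)`. -/
def Connects (c : OneCell A) (x y : A.L) : Prop :=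
  c.b0 0 = x ∧ A.IsEval1 c.b0 y

end OneCell

/-- `Q'_p`: the corestriction of the codifferential encoding the `SLie∞`-structure:
`Q'_1 = ∂` and `Q'_p = {·, …, ·}_p` for `p ≠ 1`. -/
def FilteredSLie.Qarg {k : Type} [Field k] [CharZero k]
    (A : FilteredSLie k) (p : ℕ) (w : Fin p → A.L) : A.L :=
  if h : p = 1 then A.diff (w ⟨0, by omega⟩) else A.br p w

/-- The permutation of `{0, …, m-1}` sorting the indices into the consecutive blocks
determined by `π : Fin m → Fin p` (each block listed in increasing order). -/
def sortByBlocks {m p : ℕ} (π : Fin m → Fin p) : Equiv.Perm (Fin m) :=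
  Tuple.sort (fun i => (toLex (π i, i) : Fin p ×ₗ Fin m))

/-- The block of a partition `π : Fin m → Fin p` over `i : Fin p`. -/
def blockFiber {m p : ℕ} (π : Fin m → Fin p) (i : Fin p) : Finset (Fin m) :=
  Finset.univ.filter (fun a => π a = i)


/-- An `∞`-morphism `U : A → B` of filtered `SLie∞`-algebras, compatible with the
filtrations.  It is recorded via its corestriction: the family of graded symmetric
degree-`0` multilinear maps `U' m : A^m → B` (`m ≥ 1`).  The field `compat` is the
componentwise form of the equation `U ∘ Q = Q̃ ∘ U` of coalgebra homomorphisms: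
the sum over `(p, m-p)`-shuffles is written as a sum over nonempty subsets `S`,
and the corestriction of `Q̃ ∘ U` as a sum over partitions of `{0, …, m-1}`
(with ordered blocks, whence the factor `1/p!`), encoded by surjections
`π : Fin m → Fin p`. -/
structure InfMorphism (A B : FilteredSLie k) where
  U' : ∀ m : ℕ, MultilinearMap k (fun _ : Fin m => A.L) B.L
  U'_zero : U' 0 = 0
  U'_deg : ∀ (m : ℕ) (d : Fin m → ℤ) (v : Fin m → A.L), (∀ i, v i ∈ A.deg (d i)) →
      U' m v ∈ B.deg (∑ i, d i)
  U'_symm : ∀ (m : ℕ) (d : Fin m → ℤ) (v : Fin m → A.L), (∀ i, v i ∈ A.deg (d i)) →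
      ∀ σ : Equiv.Perm (Fin m), U' m (v ∘ σ) = ((koszulSign d σ : ℤˣ) : ℤ) • U' m v
  U'_filt : ∀ (m : ℕ) (ι : Fin m → ℕ) (v : Fin m → A.L), (∀ i, v i ∈ A.F (ι i)) →
      U' m v ∈ B.F (∑ i, ι i)
  compat : ∀ (m : ℕ), 1 ≤ m → ∀ (d : Fin m → ℤ) (v : Fin m → A.L),
      (∀ i, v i ∈ A.deg (d i)) →
      (∑ S ∈ Finset.univ.filter (fun S : Finset (Fin m) => S.Nonempty),
        ((koszulSign d (moveFrontPerm S) : ℤˣ) : ℤ) •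
          U' (m - S.card + 1)
            (Fin.cons (A.Qarg S.card fun j => v (moveFrontPerm S (frontIdx S j)))
              (fun j => v (moveFrontPerm S (backIdx S j)))))
      =
      ∑ p ∈ Finset.Icc 1 m,
        ((p.factorial : k)⁻¹) •
          ∑ π ∈ Finset.univ.filter (fun π : Fin m → Fin p => Function.Surjective π),
            ((koszulSign d (sortByBlocks π) : ℤˣ) : ℤ) •
              B.Qarg p (fun i =>
                U' (blockFiber π i).card
                  (fun j => v (((blockFiber π i).orderIsoOfFin rfl j : Fin m))))

namespace InfMorphism

variable {k : Type} [Field k] [CharZero k] {A B : FilteredSLie k}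

/-- The linear term `φ` of an `∞`-morphism. -/
def lin (U : InfMorphism k A B) (x : A.L) : B.L := U.U' 1 (fun _ => x)

/-- Partial sums of `U_*(α) = Σ_{m ≥ 1} (1/m!) U'(α^m)`. -/
def pushPartial (U : InfMorphism k A B) (α : A.L) (M : ℕ) : B.L :=
  ∑ m ∈ Finset.range (M + 1), ((m.factorial : k)⁻¹) • U.U' m (fun _ => α)

/-- `U.IsPush α β` : `β = U_*(α)`. -/
def IsPush (U : InfMorphism k A B) (α : A.L) (β : B.L) : Prop :=
  B.IsLim (U.pushPartial α) β

/-- The `j`-th coefficient of `U'` applied to power series (Cauchy product). -/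
def coeffU (U : InfMorphism k A B) (m : ℕ) (c : Fin m → (ℕ → A.L)) (j : ℕ) : B.L :=
  ∑ f ∈ Finset.univ.filter (fun f : Fin m → Fin (j + 1) => ∑ i, ((f i : ℕ)) = j),
    U.U' m (fun i => c i (f i))

/-- `U.IsPushCell c c'` : the `1`-cell `c'` of `MC_•(B)` is the image
`(U ⊗̂ Ω₁)_* c` of the `1`-cell `c` of `MC_•(A)`. -/
def IsPushCell (U : InfMorphism k A B) (c : OneCell A) (c' : OneCell B) : Prop :=
  (∀ j, B.IsLim (fun M => ∑ m ∈ Finset.range (M + 1),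
      ((m.factorial : k)⁻¹) • U.coeffU m (fun _ => c.b0) j) (c'.b0 j)) ∧
  (∀ j, B.IsLim (fun M => ∑ m ∈ Finset.range (M + 1),
      ((m.factorial : k)⁻¹) •
        U.coeffU (m + 1) (fun i : Fin (m + 1) => if (i : ℕ) < m then c.b0 else c.b1) j)
      (c'.b1 j))

end InfMorphism

/-- The linear term `φ` of `U` restricts to a quasi-isomorphism of cochain complexes
`F_n A → F_n B`:  `φ` induces a surjection and an injection on the cohomology of the
subcomplexes `F_n` (in every internal degree `d`). -/
def IsQuasiIsoOnF {k : Type} [Field k] [CharZero k] {A B : FilteredSLie k}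
    (U : InfMorphism k A B) (n : ℕ) : Prop :=
  (∀ (d : ℤ) (x : B.L), x ∈ B.F n → x ∈ B.deg d → B.diff x = 0 →
      ∃ y z, y ∈ A.F n ∧ y ∈ A.deg d ∧ A.diff y = 0 ∧
        z ∈ B.F n ∧ z ∈ B.deg (d - 1) ∧ U.lin y - x = B.diff z) ∧
  (∀ (d : ℤ) (y : A.L), y ∈ A.F n → y ∈ A.deg d → A.diff y = 0 →
      (∃ z, z ∈ B.F n ∧ z ∈ B.deg (d - 1) ∧ U.lin y = B.diff z) →
      ∃ w, w ∈ A.F n ∧ w ∈ A.deg (d - 1) ∧ y = A.diff w)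

/-- The linear term `φ` of `U` induces a quasi-isomorphism of the associated graded
quotient complexes `F_n A / F_{n+1} A → F_n B / F_{n+1} B`. -/
def IsQuasiIsoOnGr {k : Type} [Field k] [CharZero k] {A B : FilteredSLie k}
    (U : InfMorphism k A B) (n : ℕ) : Prop :=
  (∀ (d : ℤ) (x : B.L), x ∈ B.F n → x ∈ B.deg d → B.diff x ∈ B.F (n + 1) →
      ∃ y z, y ∈ A.F n ∧ y ∈ A.deg d ∧ A.diff y ∈ A.F (n + 1) ∧
        z ∈ B.F n ∧ z ∈ B.deg (d - 1) ∧ U.lin y - x - B.diff z ∈ B.F (n + 1)) ∧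
  (∀ (d : ℤ) (y : A.L), y ∈ A.F n → y ∈ A.deg d → A.diff y ∈ A.F (n + 1) →
      (∃ z, z ∈ B.F n ∧ z ∈ B.deg (d - 1) ∧ U.lin y - B.diff z ∈ B.F (n + 1)) →
      ∃ w, w ∈ A.F n ∧ w ∈ A.deg (d - 1) ∧ y - A.diff w ∈ A.F (n + 1))

/-!
STATEMENT 7.  Let `L`, `L̃` be filtered `SLie∞`-algebras, `n ≥ 1`, and
`U : L → L̃` an `∞`-morphism compatible with the filtrations whose linear term
`φ` induces a quasi-isomorphism `F_n L / F_{n+1} L → F_n L̃ / F_{n+1} L̃`.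
Let `α`, `α'` be Maurer–Cartan elements of `L` with `α' - α ∈ F_n L`, and
suppose there exists a rectified `1`-cell `β̃ = β̃₀(t₀) + dt₀ β̃₁` in
`MC_•(L̃)` with `β̃₁ ∈ (F_n L̃)^{-1}`, `β̃₀(0) = U_*(α)` and `β̃₀(1) = U_*(α')`.
Then `α' - α`, which represents a cocycle in the quotient complex
`F_n L / F_{n+1} L`, represents a coboundary there: there exists
`ρ ∈ (F_n L)^{-1}` with `α' - α - ∂ρ ∈ F_{n+1} L`.
-/

section MyAux

variable {k : Type} [Field k] [CharZero k] {A : FilteredSLie k}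

lemma myIsLim_sub_const {a : ℕ → A.L} {x cst : A.L} {p : ℕ}
    (ha : A.IsLim a x) (M0 : ℕ) (h : ∀ M, M0 ≤ M → a M - cst ∈ A.F p) :
    x - cst ∈ A.F p := by
  obtain ⟨N, hN⟩ := ha p
  have h1 := hN (max N M0) (le_max_left _ _)
  have h2 := h (max N M0) (le_max_right _ _)
  have e : x - cst = (x - a (max N M0)) + (a (max N M0) - cst) := by abel
  rw [e]; exact add_mem h1 h2

lemma myIsLim_sub_sub {a b : ℕ → A.L} {x y cst : A.L} {p : ℕ}
    (ha : A.IsLim a x) (hb : A.IsLim b y) (M0 : ℕ)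
    (h : ∀ M, M0 ≤ M → a M - b M - cst ∈ A.F p) :
    x - y - cst ∈ A.F p := by
  obtain ⟨N1, hN1⟩ := ha p
  obtain ⟨N2, hN2⟩ := hb p
  set M := max (max N1 N2) M0 with hM
  have h1 := hN1 M (le_trans (le_max_left _ _) (le_max_left _ _))
  have h2 := hN2 M (le_trans (le_max_right _ _) (le_max_left _ _))
  have h3 := h M (le_max_right _ _)
  have e : x - y - cst = (x - a M) - (y - b M) + (a M - b M - cst) := by abel
  rw [e]; exact add_mem (sub_mem h1 h2) h3

lemma myTelescope {W : Type} [AddCommGroup W] [Module k W]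
    {m : ℕ} (G : MultilinearMap k (fun _ : Fin m => A.L) W)
    (FW : Submodule k W) (α α' : A.L)
    (hG : ∀ (i : Fin m) (v : Fin m → A.L), v i = α' - α → G v ∈ FW) :
    G (fun _ => α') - G (fun _ => α) ∈ FW := by
  classical
  set w : ℕ → (Fin m → A.L) := fun t j => if (j : ℕ) < t then α' else α with hw
  have h0 : (fun _ : Fin m => α) = w 0 := by funext j; simp [hw]
  have hm : (fun _ : Fin m => α') = w m := by funext j; simp [hw, j.isLt]
  rw [h0, hm, ← Finset.sum_range_sub (fun t => G (w t)) m]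
  apply Submodule.sum_mem
  intro t ht
  rw [Finset.mem_range] at ht
  set i : Fin m := ⟨t, ht⟩ with hi
  have e1 : w (t + 1) = Function.update (w t) i α' := by
    funext j
    rcases eq_or_ne j i with rfl | hj
    · simp [hw, hi]
    · rw [Function.update_of_ne hj]
      simp only [hw]
      have hne : (j : ℕ) ≠ t := fun h => hj (Fin.ext (by simp [hi, h]))
      by_cases h : (j : ℕ) < t
      · simp [h, Nat.lt_succ_of_lt h]
      · have h2 : ¬ (j : ℕ) < t + 1 := by omega
        simp [h, h2]
  have e2 : w t = Function.update (w t) i α := by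
    funext j
    rcases eq_or_ne j i with rfl | hj
    · simp [hw, hi]
    · rw [Function.update_of_ne hj]
  have e3 : G (w (t + 1)) - G (w t) = G (Function.update (w t) i (α' - α)) := by
    rw [e1]; nth_rewrite 2 [e2]
    exact (G.map_update_sub (w t) i α' α).symm
  rw [e3]
  exact hG i _ (by simp)

lemma mySum_ite_ge {m : ℕ} (hm : 2 ≤ m) {n : ℕ} (hn : 1 ≤ n) (i : Fin m) :
    n + 1 ≤ ∑ j : Fin m, (if j = i then n else 1) := by
  obtain ⟨i', hi'⟩ : ∃ i' : Fin m, i' ≠ i := by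
    rcases eq_or_ne i ⟨0, by omega⟩ with rfl | h
    · exact ⟨⟨1, by omega⟩, by simp [Fin.ext_iff]⟩
    · exact ⟨⟨0, by omega⟩, fun h' => h h'.symm⟩
  calc n + 1 = ∑ j ∈ ({i, i'} : Finset (Fin m)), (if j = i then n else 1) := by
        rw [Finset.sum_pair (Ne.symm hi')]; simp [hi']
    _ ≤ _ := Finset.sum_le_sum_of_subset (Finset.subset_univ _)

lemma myFilt_one_mem {W : Type} [AddCommGroup W] [Module k W]
    {m : ℕ} (hm : 2 ≤ m) {n : ℕ} (hn : 1 ≤ n)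
    (FF : ℕ → Submodule k W)
    (Fanti : ∀ {a b : ℕ}, a ≤ b → FF b ≤ FF a)
    (G : (Fin m → A.L) → W)
    (hfilt : ∀ (ι : Fin m → ℕ) (v : Fin m → A.L), (∀ j, v j ∈ A.F (ι j)) →
      G v ∈ FF (∑ j, ι j))
    (i : Fin m) (v : Fin m → A.L) (hv : v i ∈ A.F n) : G v ∈ FF (n + 1) := by
  classical
  have h1 : G v ∈ FF (∑ j : Fin m, if j = i then n else 1) := by
    apply hfilt
    intro j
    by_cases h : j = i
    · subst h; simpa using hv
    · simp only [if_neg h, A.F_one]; trivial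
  exact Fanti (mySum_ite_ge hm hn i) h1

lemma mySum_ite_lt_ge {m n : ℕ} (hm : 1 ≤ m) (hn : 1 ≤ n) :
    n + 1 ≤ ∑ i : Fin (m + 1), (if (i : ℕ) < m then 1 else n) := by
  have hne : (⟨0, by omega⟩ : Fin (m + 1)) ≠ ⟨m, by omega⟩ := by
    simp [Fin.ext_iff]; omega
  calc n + 1 = ∑ i ∈ ({⟨0, by omega⟩, ⟨m, by omega⟩} : Finset (Fin (m + 1))),
        (if (i : ℕ) < m then 1 else n) := by
        rw [Finset.sum_pair hne]
        simp only [Fin.val_mk]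
        rw [if_pos (by omega : 0 < m), if_neg (lt_irrefl m)]
        omega
    _ ≤ _ := Finset.sum_le_sum_of_subset (Finset.subset_univ _)

lemma myCoeffBr_flow_mem {B : FilteredSLie k} {n : ℕ} (hn : 1 ≤ n) (m : ℕ) (hm : 1 ≤ m)
    (b0 b1 : ℕ → B.L) (hb1 : ∀ j, b1 j ∈ B.F n) (j : ℕ) :
    B.coeffBr (m + 1) (fun i : Fin (m + 1) => if (i : ℕ) < m then b0 else b1) j
      ∈ B.F (n + 1) := by
  unfold FilteredSLie.coeffBr
  apply Submodule.sum_mem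
  intro f hf
  have h1 : B.br (m + 1) (fun i => (if (i : ℕ) < m then b0 else b1) (f i))
      ∈ B.F (∑ i : Fin (m + 1), if (i : ℕ) < m then 1 else n) := by
    apply B.F_br
    intro i
    by_cases h : (i : ℕ) < m
    · simp only [if_pos h, B.F_one]; trivial
    · simp only [if_neg h]; exact hb1 _
  exact B.F_anti (mySum_ite_lt_ge hm hn) h1

lemma myMultilinear_one_sub {W : Type} [AddCommGroup W] [Module k W]
    (G : MultilinearMap k (fun _ : Fin 1 => A.L) W) (x y : A.L) :
    G (fun _ => x) - G (fun _ => y) = G (fun _ => x - y) := by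
  have h : ∀ z : A.L, (fun _ : Fin 1 => z) = Function.update (fun _ : Fin 1 => x) 0 z := by
    intro z; funext j; rw [Subsingleton.elim j 0]; simp
  rw [h x, h y, h (x - y), G.map_update_sub]

end MyAux

theorem difference_is_coboundary
    {k : Type} [Field k] [CharZero k] {A B : FilteredSLie k}
    (U : InfMorphism k A B) (n : ℕ) (hn : 1 ≤ n)
    (hqis : IsQuasiIsoOnGr U n)
    (α α' : A.L) (hα : A.IsMC α) (hα' : A.IsMC α')
    (hdiff : α' - α ∈ A.F n)
    (Uα Uα' : B.L) (hUα : U.IsPush α Uα) (hUα' : U.IsPush α' Uα')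
    (c : OneCell B) (hrect : c.Rectified) (hc1 : c.b1 0 ∈ B.F n)
    (hc : c.Connects Uα Uα') :
    ∃ ρ : A.L, ρ ∈ A.deg (-1) ∧ ρ ∈ A.F n ∧ α' - α - A.diff ρ ∈ A.F (n + 1) := by
  classical
  have hy0 : α' - α ∈ A.deg 0 := Submodule.sub_mem _ hα'.1 hα.1
  -- Step B : ∂(α' - α) ∈ F (n+1)
  have hdy : A.diff (α' - α) ∈ A.F (n + 1) := by
    have key : ∀ M, 0 ≤ M → A.curvPartial α' M - A.curvPartial α M - A.diff (α' - α)
        ∈ A.F (n + 1) := by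
      intro M _
      have hrw : A.curvPartial α' M - A.curvPartial α M - A.diff (α' - α)
          = ∑ m ∈ Finset.range (M + 1), ((m.factorial : k)⁻¹) •
              (A.br m (fun _ => α') - A.br m (fun _ => α)) := by
        simp only [FilteredSLie.curvPartial, smul_sub, Finset.sum_sub_distrib, map_sub]
        abel
      rw [hrw]
      apply Submodule.sum_mem
      intro m _
      rcases Nat.lt_or_ge m 2 with h2 | h2
      · rw [A.br_low m h2]; simp
      · exact Submodule.smul_mem _ _ (myTelescope (A.br m) (A.F (n + 1)) α α'
          (fun i v hvi => myFilt_one_mem h2 hn A.F (fun hab => A.F_anti hab)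
            (A.br m) (A.F_br m) i v (by rw [hvi]; exact hdiff)))
    have h := myIsLim_sub_sub hα'.2 hα.2 0 key
    have e : A.diff (α' - α) = -((0 : A.L) - 0 - A.diff (α' - α)) := by abel
    rw [e]; exact neg_mem h
  -- Step C : Uα' - Uα - φ(α' - α) ∈ F (n+1)
  have hlin : Uα' - Uα - U.lin (α' - α) ∈ B.F (n + 1) := by
    have key : ∀ M, 1 ≤ M → U.pushPartial α' M - U.pushPartial α M - U.lin (α' - α)
        ∈ B.F (n + 1) := by
      intro M hM
      have hrw : U.pushPartial α' M - U.pushPartial α M - U.lin (α' - α)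
          = ∑ m ∈ Finset.range (M + 1),
              (((m.factorial : k)⁻¹) • (U.U' m (fun _ => α') - U.U' m (fun _ => α))
                - if m = 1 then U.lin (α' - α) else 0) := by
        rw [Finset.sum_sub_distrib, Finset.sum_ite_eq' (Finset.range (M + 1)) 1
          (fun _ => U.lin (α' - α)), if_pos (by simp [Finset.mem_range]; omega)]
        simp only [InfMorphism.pushPartial, smul_sub, Finset.sum_sub_distrib]
      rw [hrw]
      apply Submodule.sum_mem
      intro m _
      rcases Nat.lt_or_ge m 2 with h2 | h2
      · interval_cases m
        · simp [U.U'_zero]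
        · rw [if_pos rfl, myMultilinear_one_sub (U.U' 1) α' α]
          simp [InfMorphism.lin, Nat.factorial]
      · rw [if_neg (by omega), sub_zero]
        exact Submodule.smul_mem _ _ (myTelescope (U.U' m) (B.F (n + 1)) α α'
          (fun i v hvi => myFilt_one_mem h2 hn B.F (fun hab => B.F_anti hab)
            (U.U' m) (U.U'_filt m) i v (by rw [hvi]; exact hdiff)))
    exact myIsLim_sub_sub hUα' hUα 1 key
  -- Step D : flow equation mod F (n+1)
  have hb1F : ∀ j, c.b1 j ∈ B.F n := by
    intro j
    cases j with
    | zero => exact hc1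
    | succ j => rw [hrect (j + 1) (by omega)]; exact zero_mem _
  have hflow : ∀ j, (j + 1) • c.b0 (j + 1) - B.diff (c.b1 j) ∈ B.F (n + 1) := by
    intro j
    apply myIsLim_sub_const (c.flow j) 0
    intro M _
    have hrw : B.coeffFlowPartial c.b0 c.b1 j M - B.diff (c.b1 j)
        = ∑ m ∈ Finset.range (M + 1), ((m.factorial : k)⁻¹) •
            B.coeffBr (m + 1) (fun i : Fin (m + 1) => if (i : ℕ) < m then c.b0 else c.b1) j := by
      simp only [FilteredSLie.coeffFlowPartial]; abel
    rw [hrw]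
    apply Submodule.sum_mem
    intro m _
    rcases Nat.eq_zero_or_pos m with rfl | hm
    · simp [FilteredSLie.coeffBr, B.br_low 1 (by omega)]
    · exact Submodule.smul_mem _ _ (myCoeffBr_flow_mem hn m hm c.b0 c.b1 hb1F j)
  have hb01 : c.b0 1 - B.diff (c.b1 0) ∈ B.F (n + 1) := by
    have h := hflow 0
    simpa using h
  have hb0hi : ∀ j, 2 ≤ j → c.b0 j ∈ B.F (n + 1) := by
    intro j hj
    obtain ⟨i, rfl⟩ : ∃ i, j = i + 1 := ⟨j - 1, by omega⟩
    have h1 := hflow i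
    rw [hrect i (by omega), map_zero, sub_zero] at h1
    have h2 : ((i + 1 : ℕ) : k) • c.b0 (i + 1) ∈ B.F (n + 1) := by
      rw [Nat.cast_smul_eq_nsmul]; exact h1
    have h3 := Submodule.smul_mem (B.F (n + 1)) (((i + 1 : ℕ) : k))⁻¹ h2
    rwa [inv_smul_smul₀ (Nat.cast_ne_zero.mpr (Nat.succ_ne_zero i))] at h3
  -- Step E : evaluation at 1
  have heval : Uα' - (c.b0 0 + c.b0 1) ∈ B.F (n + 1) := by
    apply myIsLim_sub_const hc.2 1
    intro M hM
    have hsplit : ∑ j ∈ Finset.range (M + 1), c.b0 j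
        = (c.b0 0 + c.b0 1) + ∑ j ∈ Finset.Ico 2 (M + 1), c.b0 j := by
      rw [Finset.range_eq_Ico,
        ← Finset.sum_Ico_consecutive c.b0 (by omega : 0 ≤ 2) (by omega : 2 ≤ M + 1)]
      congr 1
      rw [← Finset.range_eq_Ico]
      simp [Finset.sum_range_succ]
    rw [hsplit]
    have e : (c.b0 0 + c.b0 1) + ∑ j ∈ Finset.Ico 2 (M + 1), c.b0 j - (c.b0 0 + c.b0 1)
        = ∑ j ∈ Finset.Ico 2 (M + 1), c.b0 j := by abel
    rw [e]
    exact Submodule.sum_mem _ (fun j hj => hb0hi j (Finset.mem_Ico.mp hj).1)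
  have hUdiffb : Uα' - Uα - B.diff (c.b1 0) ∈ B.F (n + 1) := by
    have e : Uα' - Uα - B.diff (c.b1 0)
        = (Uα' - (c.b0 0 + c.b0 1)) + (c.b0 1 - B.diff (c.b1 0)) := by
      rw [← hc.1]; abel
    rw [e]; exact add_mem heval hb01
  -- Step F
  have hkey : U.lin (α' - α) - B.diff (c.b1 0) ∈ B.F (n + 1) := by
    have e : U.lin (α' - α) - B.diff (c.b1 0)
        = (Uα' - Uα - B.diff (c.b1 0)) - (Uα' - Uα - U.lin (α' - α)) := by abel
    rw [e]; exact sub_mem hUdiffb hlin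
  -- Step G : apply the quasi-isomorphism on the associated graded
  obtain ⟨w, hw1, hw2, hw3⟩ := hqis.2 0 (α' - α) hdiff hy0 hdy
    ⟨c.b1 0, hb1F 0, by simpa using c.b1_deg 0, hkey⟩
  refine ⟨w, ?_, hw1, hw3⟩
  have e : (0 : ℤ) - 1 = -1 := by norm_num
  rwa [e] at hw2
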